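/- Let p ≥ 2, α₂, β > 0, ψ₂, ψ₃ ∈ L²(ℝ^n) with ψ₂ ≥ 0, and let f : ℝ^n × ℝ → ℝ be C¹ with |f(x,s)| ≤ α₂|s|^{p−1} + ψ₂(x), ∂f/∂s(x,s) ≤ β, and |∇_x f(x,s)| ≤ ψ₃(x) for all x ∈ ℝ^n, s ∈ ℝ. Then there exists c > 0, depending only on α₂, β, p, ‖ψ₂‖_{L²} and ‖ψ₃‖_{L²}, such that for every u ∈ C²(ℝ^n) with compact support and every ζ ∈ C²(ℝ^n) with Δζ ∈ L²(ℝ^n) ∩ L^p(ℝ^n): −∫_{ℝ^n} f(x,u(x))·(Δu(x) − Δζ(x)) dx ≤ c(‖∇u‖_{L²}² + ‖u‖_{L^p}^p) + c(‖Δζ‖_{L²}² + ‖Δζ‖_{L^p}^p + 1). -/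

import Mathlib

open MeasureTheory Set
noncomputable section

/-- The Laplacian of a function on `ℝ^n`, as the sum of its second partial derivatives. -/
def lap {n : ℕ} (u : EuclideanSpace ℝ (Fin n) → ℝ) (x : EuclideanSpace ℝ (Fin n)) : ℝ :=
  ∑ i : Fin n, fderiv ℝ (fun y => fderiv ℝ u y (EuclideanSpace.single i 1)) x
    (EuclideanSpace.single i 1)

private lemma inner_gradient_apply {n : ℕ} (h : EuclideanSpace ℝ (Fin n) → ℝ)
    (x v : EuclideanSpace ℝ (Fin n)) :
    (inner ℝ (gradient h x) v : ℝ) = fderiv ℝ h x v := by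
  rw [gradient]; exact InnerProductSpace.toDual_symm_apply

private lemma sum_inner_single {n : ℕ} (a b : EuclideanSpace ℝ (Fin n)) :
    ∑ i : Fin n, (inner ℝ a (EuclideanSpace.single i 1) : ℝ) *
      (inner ℝ b (EuclideanSpace.single i 1) : ℝ) = (inner ℝ a b : ℝ) := by
  have h : ∀ (v : EuclideanSpace ℝ (Fin n)) (i : Fin n),
      (inner ℝ v (EuclideanSpace.single i 1) : ℝ) = v i := by
    intro v i
    rw [EuclideanSpace.inner_single_right]
    simp
  simp only [h, PiLp.inner_apply, RCLike.inner_apply, conj_trivial]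
  exact Finset.sum_congr rfl fun i _ => mul_comm _ _

private lemma fderiv_comp_formula {n : ℕ} (f : EuclideanSpace ℝ (Fin n) → ℝ → ℝ)
    (hf : ContDiff ℝ 1 (fun xs : EuclideanSpace ℝ (Fin n) × ℝ => f xs.1 xs.2))
    (u : EuclideanSpace ℝ (Fin n) → ℝ) (hu : Differentiable ℝ u)
    (x v : EuclideanSpace ℝ (Fin n)) :
    fderiv ℝ (fun y => f y (u y)) x v
      = fderiv ℝ (fun y => f y (u x)) x v + deriv (fun r => f x r) (u x) * fderiv ℝ u x v := by
  set ftilde : EuclideanSpace ℝ (Fin n) × ℝ → ℝ := fun xs => f xs.1 xs.2 with hft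
  set Df := fderiv ℝ ftilde (x, u x) with hDf
  have hfd : HasFDerivAt ftilde Df (x, u x) := (hf.differentiable one_ne_zero _).hasFDerivAt
  have hux : HasFDerivAt u (fderiv ℝ u x) x := (hu x).hasFDerivAt
  have hgx : HasFDerivAt (fun y : EuclideanSpace ℝ (Fin n) => (y, u y))
      ((ContinuousLinearMap.id ℝ _).prod (fderiv ℝ u x)) x := (hasFDerivAt_id x).prodMk hux
  have hFx : HasFDerivAt (fun y => f y (u y))
      (Df.comp ((ContinuousLinearMap.id ℝ _).prod (fderiv ℝ u x))) x := by
    have := hfd.comp x hgx; exact this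
  have h1 : HasFDerivAt (fun y => f y (u x))
      (Df.comp ((ContinuousLinearMap.id ℝ _).prod 0)) x :=
    by
      have hg0 : HasFDerivAt (fun y : EuclideanSpace ℝ (Fin n) => (y, u x))
          ((ContinuousLinearMap.id ℝ _).prod 0) x :=
        (hasFDerivAt_id x).prodMk (hasFDerivAt_const (u x) x)
      have := hfd.comp x hg0; exact this
  have h2 : HasDerivAt (fun r => f x r) (Df (0, 1)) (u x) := by
    have hφ : HasDerivAt (fun r : ℝ => ((x : EuclideanSpace ℝ (Fin n)), r)) (0, 1) (u x) :=
      (hasDerivAt_const _ _).prodMk (hasDerivAt_id _)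
    exact hfd.comp_hasDerivAt _ hφ
  rw [hFx.fderiv, h1.fderiv, h2.deriv]
  have hv : (v, fderiv ℝ u x v)
      = (v, (0 : ℝ)) + (fderiv ℝ u x v) • ((0 : EuclideanSpace ℝ (Fin n)), (1 : ℝ)) := by simp
  simp only [ContinuousLinearMap.comp_apply, ContinuousLinearMap.prod_apply,
    ContinuousLinearMap.id_apply, ContinuousLinearMap.zero_apply]
  rw [hv, map_add, _root_.map_smul]
  simp [mul_comm]

private lemma rpow_sub_one_mul {p : ℝ} (hp : 2 ≤ p) {b : ℝ} (hb : 0 ≤ b) :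
    b ^ (p - 1) * b = b ^ p := by
  rcases eq_or_lt_of_le hb with hb0 | hb0
  · rw [← hb0, Real.zero_rpow (by linarith : p ≠ 0),
      Real.zero_rpow (by intro h; nlinarith [h] : p - 1 ≠ 0), zero_mul]
  · have h := Real.rpow_add hb0 (p - 1) 1
    rw [Real.rpow_one] at h
    rw [← h]; norm_num

private lemma young_aux {p : ℝ} (hp : 2 ≤ p) {a b : ℝ} (ha : 0 ≤ a) (hb : 0 ≤ b) :
    a ^ (p - 1) * b ≤ a ^ p + b ^ p := by
  have hp1 : (0:ℝ) ≤ p - 1 := by linarith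
  rcases le_total a b with h | h
  · have h1 : a ^ (p - 1) * b ≤ b ^ (p - 1) * b :=
      mul_le_mul_of_nonneg_right (Real.rpow_le_rpow ha h hp1) hb
    rw [rpow_sub_one_mul hp hb] at h1
    nlinarith [Real.rpow_nonneg ha p]
  · have h1 : a ^ (p - 1) * b ≤ a ^ (p - 1) * a :=
      mul_le_mul_of_nonneg_left h (Real.rpow_nonneg ha _)
    rw [rpow_sub_one_mul hp ha] at h1
    nlinarith [Real.rpow_nonneg hb p]


private lemma bnd_aux {p α₂ : ℝ} (hp : 2 ≤ p) (hα₂ : 0 < α₂) {Fv uv Lv ψv : ℝ}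
    (h1 : |Fv| ≤ α₂ * |uv| ^ (p - 1) + ψv) :
    |Fv * Lv| ≤ α₂ * (|uv| ^ p + |Lv| ^ p) + (ψv ^ 2 / 2 + Lv ^ 2 / 2) := by
  have h0 : |Fv * Lv| = |Fv| * |Lv| := abs_mul _ _
  have h2 : |uv| ^ (p - 1) * |Lv| ≤ |uv| ^ p + |Lv| ^ p :=
    young_aux hp (abs_nonneg _) (abs_nonneg _)
  have h3 : ψv * |Lv| ≤ ψv ^ 2 / 2 + Lv ^ 2 / 2 := by
    nlinarith [sq_nonneg (ψv - |Lv|), sq_abs Lv]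
  have h4 : |Fv| * |Lv| ≤ (α₂ * |uv| ^ (p - 1) + ψv) * |Lv| :=
    mul_le_mul_of_nonneg_right h1 (abs_nonneg _)
  nlinarith [mul_le_mul_of_nonneg_left h2 (le_of_lt hα₂)]

set_option maxHeartbeats 1000000 in
/-- Estimate of the nonlinear term against the Laplacian: under the growth
and gradient conditions on `f`, there is `c > 0` depending only on `α₂, β, p, ‖ψ₂‖₂, ‖ψ₃‖₂`
such that for all compactly supported `u ∈ C²` and all `ζ ∈ C²` with `Δζ ∈ L² ∩ L^p`,
`−∫ f(x,u)(Δu − Δζ) ≤ c(‖∇u‖₂² + ‖u‖_p^p) + c(‖Δζ‖₂² + ‖Δζ‖_p^p + 1)`. -/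
theorem stmt3 (n : ℕ) (p α₂ β : ℝ) (hp : 2 ≤ p) (hα₂ : 0 < α₂) (hβ : 0 < β)
    (ψ₂ ψ₃ : EuclideanSpace ℝ (Fin n) → ℝ)
    (hψ₂_mem : MemLp ψ₂ 2 volume) (hψ₂_nonneg : ∀ x, 0 ≤ ψ₂ x)
    (hψ₃_mem : MemLp ψ₃ 2 volume) :
    ∃ c : ℝ, 0 < c ∧
      ∀ (f : EuclideanSpace ℝ (Fin n) → ℝ → ℝ),
        ContDiff ℝ 1 (fun xs : EuclideanSpace ℝ (Fin n) × ℝ => f xs.1 xs.2) →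
        (∀ x s, |f x s| ≤ α₂ * |s| ^ (p - 1) + ψ₂ x) →
        (∀ x s, deriv (fun r => f x r) s ≤ β) →
        (∀ x s, ‖gradient (fun y => f y s) x‖ ≤ ψ₃ x) →
        ∀ (u ζ : EuclideanSpace ℝ (Fin n) → ℝ),
          ContDiff ℝ 2 u → HasCompactSupport u →
          ContDiff ℝ 2 ζ →
          MemLp (lap ζ) 2 volume → MemLp (lap ζ) (ENNReal.ofReal p) volume →
          -(∫ x, f x (u x) * (lap u x - lap ζ x)) ≤
            c * ((∫ x, ‖gradient u x‖ ^ 2) + (∫ x, |u x| ^ p))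
              + c * ((∫ x, (lap ζ x) ^ 2) + (∫ x, |lap ζ x| ^ p) + 1) := by
  classical
  set K₂ : ℝ := ∫ x : EuclideanSpace ℝ (Fin n), (ψ₂ x) ^ 2 with hK₂def
  set K₃ : ℝ := ∫ x : EuclideanSpace ℝ (Fin n), (ψ₃ x) ^ 2 with hK₃def
  have hK₂0 : 0 ≤ K₂ := integral_nonneg fun x => sq_nonneg _
  have hK₃0 : 0 ≤ K₃ := integral_nonneg fun x => sq_nonneg _
  set c : ℝ := α₂ + β + 1 + K₂ / 2 + K₃ / 2 with hcdef
  have hc0 : 0 < c := by positivity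
  refine ⟨c, hc0, ?_⟩
  intro f hf hgrow hfs hfx u ζ hu husupp hζ hζ2 hζp
  have hp0 : (0:ℝ) < p := by linarith
  -- basic regularity
  have hu1 : ContDiff ℝ 1 u := hu.of_le (by norm_num)
  have hudiff : Differentiable ℝ u := hu1.differentiable one_ne_zero
  have hucont : Continuous u := hudiff.continuous
  set F : EuclideanSpace ℝ (Fin n) → ℝ := fun x => f x (u x) with hFdef
  have hF1 : ContDiff ℝ 1 F := hf.comp (contDiff_id.prodMk hu1)
  have hFdiff : Differentiable ℝ F := hF1.differentiable one_ne_zero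
  have hFcont : Continuous F := hFdiff.continuous
  have hFd_cont : Continuous (fun x => fderiv ℝ F x) := hF1.continuous_fderiv one_ne_zero
  set e : Fin n → EuclideanSpace ℝ (Fin n) := fun i => EuclideanSpace.single i (1:ℝ) with hedef
  set g1 : Fin n → EuclideanSpace ℝ (Fin n) → ℝ := fun i x => fderiv ℝ u x (e i) with hg1def
  set g2 : Fin n → EuclideanSpace ℝ (Fin n) → ℝ := fun i x => fderiv ℝ (g1 i) x (e i) with hg2def
  have hg1c : ∀ i, ContDiff ℝ 1 (g1 i) := fun i =>
    (hu.fderiv_right (m := 1) (by norm_num)).clm_apply contDiff_const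
  have hg1diff : ∀ i, Differentiable ℝ (g1 i) := fun i => (hg1c i).differentiable one_ne_zero
  have hg1cont : ∀ i, Continuous (g1 i) := fun i => (hg1diff i).continuous
  have hg1supp : ∀ i, HasCompactSupport (g1 i) := fun i => husupp.fderiv_apply ℝ (e i)
  have hg2cont : ∀ i, Continuous (g2 i) := fun i =>
    ((hg1c i).continuous_fderiv one_ne_zero).clm_apply continuous_const
  have hg2supp : ∀ i, HasCompactSupport (g2 i) := fun i => (hg1supp i).fderiv_apply ℝ (e i)
  have hlapu : ∀ x, lap u x = ∑ i, g2 i x := fun x => rfl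
  -- continuity of lap ζ
  have hζ1 : ∀ i : Fin n, ContDiff ℝ 1 (fun x => fderiv ℝ ζ x (e i)) := fun i =>
    (hζ.fderiv_right (m := 1) (by norm_num)).clm_apply contDiff_const
  have hlapζcont : Continuous (lap ζ) := by
    apply continuous_finset_sum
    intro i _
    exact ((hζ1 i).continuous_fderiv one_ne_zero).clm_apply continuous_const
  -- integrability of the pieces for integration by parts
  have intF_g2 : ∀ i, Integrable (fun x => F x * g2 i x) := fun i =>
    ((hFcont.mul (hg2cont i)).integrable_of_hasCompactSupport ((hg2supp i).mul_left))
  have intdF_g1 : ∀ i, Integrable (fun x => fderiv ℝ F x (e i) * g1 i x) := fun i =>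
    (((hFd_cont.clm_apply continuous_const).mul (hg1cont i)).integrable_of_hasCompactSupport
      ((hg1supp i).mul_left))
  have intF_g1 : ∀ i, Integrable (fun x => F x * g1 i x) := fun i =>
    ((hFcont.mul (hg1cont i)).integrable_of_hasCompactSupport ((hg1supp i).mul_left))
  -- integration by parts in each coordinate
  have ibp : ∀ i, ∫ x, F x * g2 i x = - ∫ x, fderiv ℝ F x (e i) * g1 i x := fun i =>
    integral_mul_fderiv_eq_neg_fderiv_mul_of_integrable (intdF_g1 i) (intF_g2 i) (intF_g1 i)
      (fun x _ => hFdiff x) (fun x _ => hg1diff i x)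
  have intFlapu : Integrable (fun x => F x * lap u x) := by
    have : (fun x => F x * lap u x) = fun x => ∑ i, F x * g2 i x := by
      funext x; rw [hlapu x, Finset.mul_sum]
    rw [this]
    exact integrable_finset_sum _ fun i _ => intF_g2 i
  set S : EuclideanSpace ℝ (Fin n) → ℝ := fun x => ∑ i, fderiv ℝ F x (e i) * g1 i x with hSdef
  have hS_int : Integrable S := integrable_finset_sum _ fun i _ => intdF_g1 i
  have step1 : ∫ x, F x * lap u x = - ∫ x, S x := by
    calc ∫ x, F x * lap u x = ∫ x, ∑ i, F x * g2 i x := by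
          congr 1; funext x; rw [hlapu x, Finset.mul_sum]
      _ = ∑ i, ∫ x, F x * g2 i x := integral_finset_sum _ fun i _ => intF_g2 i
      _ = ∑ i, -∫ x, fderiv ℝ F x (e i) * g1 i x := by
          exact Finset.sum_congr rfl fun i _ => ibp i
      _ = - ∑ i, ∫ x, fderiv ℝ F x (e i) * g1 i x := by rw [Finset.sum_neg_distrib]
      _ = - ∫ x, S x := by rw [← integral_finset_sum _ fun i _ => intdF_g1 i]
  -- pointwise bound for S
  have hS_le : ∀ x, S x ≤ (ψ₃ x) ^ 2 / 2 + (1 / 2 + β) * ‖gradient u x‖ ^ 2 := by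
    intro x
    set a : EuclideanSpace ℝ (Fin n) := gradient (fun y => f y (u x)) x with hadef
    set g : EuclideanSpace ℝ (Fin n) := gradient u x with hgdef
    set d : ℝ := deriv (fun r => f x r) (u x) with hddef
    have hcoord : ∀ i, fderiv ℝ F x (e i)
        = (inner ℝ a (e i) : ℝ) + d * (inner ℝ g (e i) : ℝ) := by
      intro i
      rw [hFdef]
      rw [fderiv_comp_formula f hf u hudiff x (e i)]
      rw [← inner_gradient_apply (fun y => f y (u x)) x (e i),
        ← inner_gradient_apply u x (e i)]
    have hcoord2 : ∀ i, g1 i x = (inner ℝ g (e i) : ℝ) := fun i =>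
      (inner_gradient_apply u x (e i)).symm
    have hSx : S x = (inner ℝ a g : ℝ) + d * ‖g‖ ^ 2 := by
      rw [hSdef]
      simp only [hcoord, hcoord2, add_mul]
      rw [Finset.sum_add_distrib, sum_inner_single]
      congr 1
      rw [← real_inner_self_eq_norm_sq, ← sum_inner_single g g, Finset.mul_sum]
      exact Finset.sum_congr rfl fun i _ => by ring
    have h1 : (inner ℝ a g : ℝ) ≤ ψ₃ x * ‖g‖ := by
      calc (inner ℝ a g : ℝ) ≤ ‖a‖ * ‖g‖ := real_inner_le_norm a g
        _ ≤ ψ₃ x * ‖g‖ := mul_le_mul_of_nonneg_right (hfx x (u x)) (norm_nonneg g)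
    have h2 : d ≤ β := hfs x (u x)
    have h3 : d * ‖g‖ ^ 2 ≤ β * ‖g‖ ^ 2 := mul_le_mul_of_nonneg_right h2 (sq_nonneg _)
    have h4 : ψ₃ x * ‖g‖ ≤ (ψ₃ x) ^ 2 / 2 + ‖g‖ ^ 2 / 2 := by nlinarith [sq_nonneg (ψ₃ x - ‖g‖)]
    rw [hSx]; nlinarith
  -- integrability of the bounding function for S
  have hgradcont : Continuous (fun x => gradient u x) := by
    have : Continuous (fun x => fderiv ℝ u x) := hu1.continuous_fderiv one_ne_zero
    exact (InnerProductSpace.toDual ℝ (EuclideanSpace ℝ (Fin n))).symm.continuous.comp this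
  have hgradsupp : HasCompactSupport (fun x => gradient u x) := by
    have h := (husupp.fderiv ℝ).comp_left
      (g := fun L : EuclideanSpace ℝ (Fin n) →L[ℝ] ℝ => (InnerProductSpace.toDual ℝ (EuclideanSpace ℝ (Fin n))).symm L) (map_zero _)
    exact h
  have hA_int : Integrable (fun x => ‖gradient u x‖ ^ 2) := by
    apply Continuous.integrable_of_hasCompactSupport
    · exact (hgradcont.norm).pow 2
    · exact hgradsupp.comp_left (g := fun v : EuclideanSpace ℝ (Fin n) => ‖v‖ ^ 2) (by simp)
  have hψ₃sq_int : Integrable (fun x => (ψ₃ x) ^ 2) := hψ₃_mem.integrable_sq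
  have hψ₂sq_int : Integrable (fun x => (ψ₂ x) ^ 2) := hψ₂_mem.integrable_sq
  have bound1_int : Integrable (fun x => (ψ₃ x) ^ 2 / 2 + (1 / 2 + β) * ‖gradient u x‖ ^ 2) :=
    (hψ₃sq_int.div_const 2).add (hA_int.const_mul _)
  have est1 : - ∫ x, F x * lap u x
      ≤ K₃ / 2 + (1 / 2 + β) * ∫ x, ‖gradient u x‖ ^ 2 := by
    rw [step1, neg_neg]
    calc ∫ x, S x ≤ ∫ x, ((ψ₃ x) ^ 2 / 2 + (1 / 2 + β) * ‖gradient u x‖ ^ 2) :=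
          integral_mono hS_int bound1_int hS_le
      _ = K₃ / 2 + (1 / 2 + β) * ∫ x, ‖gradient u x‖ ^ 2 := by
          rw [integral_add (hψ₃sq_int.div_const 2) (hA_int.const_mul _),
            integral_div, integral_const_mul]
  -- second term : ∫ F * lap ζ
  have hp0' : p ≠ 0 := ne_of_gt hp0
  have h_up_int : Integrable (fun x => |u x| ^ p) := by
    apply Continuous.integrable_of_hasCompactSupport
    · exact (hucont.abs).rpow_const fun x => Or.inr (le_of_lt hp0)
    · exact husupp.comp_left (g := fun t : ℝ => |t| ^ p)
        (by simp [Real.zero_rpow hp0'])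
  have h_lapζp_int : Integrable (fun x => |lap ζ x| ^ p) := by
    have h := hζp.integrable_norm_rpow (by simpa using hp0) ENNReal.ofReal_ne_top
    simpa [Real.norm_eq_abs, ENNReal.toReal_ofReal (le_of_lt hp0)] using h
  have h_lapζsq_int : Integrable (fun x => (lap ζ x) ^ 2) := hζ2.integrable_sq
  set bnd : EuclideanSpace ℝ (Fin n) → ℝ := fun x => α₂ * (|u x| ^ p + |lap ζ x| ^ p)
      + ((ψ₂ x) ^ 2 / 2 + (lap ζ x) ^ 2 / 2) with hbnddef
  have hbnd_int : Integrable bnd :=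
    ((h_up_int.add h_lapζp_int).const_mul α₂).add
      ((hψ₂sq_int.div_const 2).add (h_lapζsq_int.div_const 2))
  have hbnd_pt : ∀ x, |F x * lap ζ x| ≤ bnd x := fun x =>
    bnd_aux hp hα₂ (hgrow x (u x))
  have hFζ_int : Integrable (fun x => F x * lap ζ x) := by
    apply hbnd_int.mono' ((hFcont.mul hlapζcont).aestronglyMeasurable)
    exact ae_of_all _ fun x => by rw [Real.norm_eq_abs]; exact hbnd_pt x
  have est2 : ∫ x, F x * lap ζ x
      ≤ α₂ * (∫ x, |u x| ^ p) + α₂ * (∫ x, |lap ζ x| ^ p) + K₂ / 2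
        + (∫ x, (lap ζ x) ^ 2) / 2 := by
    calc ∫ x, F x * lap ζ x ≤ ∫ x, bnd x := by
          apply integral_mono hFζ_int hbnd_int
          intro x
          exact (le_abs_self _).trans (hbnd_pt x)
      _ = α₂ * ((∫ x, |u x| ^ p) + (∫ x, |lap ζ x| ^ p)) + (K₂ / 2 + (∫ x, (lap ζ x) ^ 2) / 2) := by
          rw [hbnddef]
          have i1 : Integrable (fun x : EuclideanSpace ℝ (Fin n) =>
              α₂ * (|u x| ^ p + |lap ζ x| ^ p)) volume := (h_up_int.add h_lapζp_int).const_mul α₂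
          have i2 : Integrable (fun x : EuclideanSpace ℝ (Fin n) =>
              (ψ₂ x) ^ 2 / 2 + (lap ζ x) ^ 2 / 2) volume :=
            (hψ₂sq_int.div_const 2).add (h_lapζsq_int.div_const 2)
          have i3 : Integrable (fun x : EuclideanSpace ℝ (Fin n) =>
              |u x| ^ p + |lap ζ x| ^ p) volume := h_up_int.add h_lapζp_int
          rw [integral_add i1 i2, integral_const_mul, integral_add h_up_int h_lapζp_int,
            integral_add (hψ₂sq_int.div_const 2) (h_lapζsq_int.div_const 2),
            integral_div, integral_div]
      _ = α₂ * (∫ x, |u x| ^ p) + α₂ * (∫ x, |lap ζ x| ^ p) + K₂ / 2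
          + (∫ x, (lap ζ x) ^ 2) / 2 := by ring
  -- split the main integral
  have hsplit : ∫ x, F x * (lap u x - lap ζ x)
      = (∫ x, F x * lap u x) - ∫ x, F x * lap ζ x := by
    rw [← integral_sub intFlapu hFζ_int]
    congr 1; funext x; ring
  -- nonnegativity of the four integrals
  set A : ℝ := ∫ x, ‖gradient u x‖ ^ 2 with hAdef
  set B : ℝ := ∫ x, |u x| ^ p with hBdef
  set C : ℝ := ∫ x, (lap ζ x) ^ 2 with hCdef
  set D : ℝ := ∫ x, |lap ζ x| ^ p with hDdef
  have hA0 : 0 ≤ A := integral_nonneg fun x => sq_nonneg _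
  have hB0 : 0 ≤ B := integral_nonneg fun x => Real.rpow_nonneg (abs_nonneg _) _
  have hC0 : 0 ≤ C := integral_nonneg fun x => sq_nonneg _
  have hD0 : 0 ≤ D := integral_nonneg fun x => Real.rpow_nonneg (abs_nonneg _) _
  have main : -(∫ x, F x * (lap u x - lap ζ x))
      ≤ K₃ / 2 + (1 / 2 + β) * A + (α₂ * B + α₂ * D + K₂ / 2 + C / 2) := by
    rw [hsplit, neg_sub]
    have := est1
    linarith [est1, est2]
  refine le_trans main ?_
  have e1 : (1 / 2 + β) * A ≤ c * A := by
    have h := mul_nonneg (show (0:ℝ) ≤ c - (1 / 2 + β) by rw [hcdef]; linarith) hA0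
    nlinarith [h]
  have e2 : α₂ * B ≤ c * B := by
    have h := mul_nonneg (show (0:ℝ) ≤ c - α₂ by rw [hcdef]; linarith) hB0
    nlinarith [h]
  have e3 : C / 2 ≤ c * C := by
    have h := mul_nonneg (show (0:ℝ) ≤ c - 1 / 2 by rw [hcdef]; linarith) hC0
    nlinarith [h]
  have e4 : α₂ * D ≤ c * D := by
    have h := mul_nonneg (show (0:ℝ) ≤ c - α₂ by rw [hcdef]; linarith) hD0
    nlinarith [h]
  have e5 : K₂ / 2 + K₃ / 2 ≤ c := by rw [hcdef]; linarith
  clear_value A B C D K₂ K₃ c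
  linarith
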